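/- Let W_Θ ⊆ W be a parabolic subgroup. The restriction of the quotient map S → S_W = S/((S^W)⁺S) to the invariant ring S^{W_Θ} is surjective onto the relative coinvariant ring S_W^{W_Θ} (the W_Θ-invariants of S_W), and its kernel equals (S^W)⁺ · S^{W_Θ}; hence S_W^{W_Θ} ≅ S^{W_Θ}/((S^W)⁺·S^{W_Θ}) ≅ S^{W_Θ} ⊗_{S^W} ℝ. -/

import Mathlib

open scoped RealInnerProductSpace

/-- The reflection in the vector `γ`: `x ↦ x − (2⟨x,γ⟩/⟨γ,γ⟩)γ`. -/
noncomputable def reflectRoot {n : ℕ} (γ x : EuclideanSpace ℝ (Fin n)) :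
    EuclideanSpace ℝ (Fin n) :=
  x - (2 * ⟪x, γ⟫ / ⟪γ, γ⟫) • γ

/-- The coroot functional `γ̌(x) = 2⟨x,γ⟩/⟨γ,γ⟩`. -/
noncomputable def corootPair {n : ℕ} (γ x : EuclideanSpace ℝ (Fin n)) : ℝ :=
  2 * ⟪x, γ⟫ / ⟪γ, γ⟫

/-- A (reduced) root system in Euclidean space `ℝ^n` together with a choice of simple
system `Δ` and the corresponding positive system `pos`. -/
structure RootData (n : ℕ) where
  /-- The set of roots. -/
  Φ : Set (EuclideanSpace ℝ (Fin n))
  /-- The simple system. -/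
  Δ : Set (EuclideanSpace ℝ (Fin n))
  /-- The positive system determined by `Δ`. -/
  pos : Set (EuclideanSpace ℝ (Fin n))
  finite : Φ.Finite
  nonzero : ∀ γ ∈ Φ, γ ≠ 0
  reduced : ∀ γ ∈ Φ, ∀ t : ℝ, t • γ ∈ Φ → t = 1 ∨ t = -1
  reflect_mem : ∀ γ ∈ Φ, ∀ β ∈ Φ, reflectRoot γ β ∈ Φ
  Δ_sub : Δ ⊆ pos
  pos_sub : pos ⊆ Φ
  simple_indep : LinearIndependent ℝ (fun a : Δ => (a : EuclideanSpace ℝ (Fin n)))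
  pos_combo : ∀ γ ∈ pos, ∃ c : EuclideanSpace ℝ (Fin n) →₀ ℝ,
    ↑c.support ⊆ Δ ∧ (∀ a, 0 ≤ c a) ∧ γ = c.sum fun a t => t • a
  pos_partition : ∀ γ ∈ Φ, (γ ∈ pos ∧ -γ ∉ pos) ∨ (γ ∉ pos ∧ -γ ∈ pos)

/-- A vector in ℝ^n regarded as a linear form, i.e. a degree-one polynomial. -/
noncomputable def toPoly {n : ℕ} (v : EuclideanSpace ℝ (Fin n)) :
    MvPolynomial (Fin n) ℝ :=
  ∑ i, MvPolynomial.C (v i) * MvPolynomial.X i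

/-- The action of a linear automorphism of ℝ^n on the polynomial ring S = Sym(ℝ^n),
determined by its action on the degree-one part. -/
noncomputable def polyAct {n : ℕ}
    (g : EuclideanSpace ℝ (Fin n) ≃ₗ[ℝ] EuclideanSpace ℝ (Fin n)) :
    MvPolynomial (Fin n) ℝ →ₐ[ℝ] MvPolynomial (Fin n) ℝ :=
  MvPolynomial.aeval fun i => toPoly (g (EuclideanSpace.single i 1))

/-- The action of the reflection s_γ on the polynomial ring S = Sym(ℝ^n). -/
noncomputable def reflPolyAct {n : ℕ} (γ : EuclideanSpace ℝ (Fin n)) :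
    MvPolynomial (Fin n) ℝ →ₐ[ℝ] MvPolynomial (Fin n) ℝ :=
  MvPolynomial.aeval fun i => toPoly (reflectRoot γ (EuclideanSpace.single i 1))

/-- The reflection group `W` generated by the reflections in the roots. -/
noncomputable def RootData.W {n : ℕ} (R : RootData n) :
    Subgroup (EuclideanSpace ℝ (Fin n) ≃ₗ[ℝ] EuclideanSpace ℝ (Fin n)) :=
  Subgroup.closure {σ | ∃ γ ∈ R.Φ, ∀ x, σ x = reflectRoot γ x}

/-- The parabolic subgroup generated by reflections in the simple roots of `Θ`. -/
noncomputable def parabolic {n : ℕ} (Θ : Set (EuclideanSpace ℝ (Fin n))) :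
    Subgroup (EuclideanSpace ℝ (Fin n) ≃ₗ[ℝ] EuclideanSpace ℝ (Fin n)) :=
  Subgroup.closure {σ | ∃ γ ∈ Θ, ∀ x, σ x = reflectRoot γ x}

/-- The set of polynomials invariant under the group `G`. -/
def invSet {n : ℕ}
    (G : Subgroup (EuclideanSpace ℝ (Fin n) ≃ₗ[ℝ] EuclideanSpace ℝ (Fin n))) :
    Set (MvPolynomial (Fin n) ℝ) :=
  {f | ∀ w ∈ G, polyAct w f = f}

/-- The ideal generated by the positive-degree `G`-invariant polynomials. -/
noncomputable def invIdeal {n : ℕ}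
    (G : Subgroup (EuclideanSpace ℝ (Fin n) ≃ₗ[ℝ] EuclideanSpace ℝ (Fin n))) :
    Ideal (MvPolynomial (Fin n) ℝ) :=
  Ideal.span {f | f ∈ invSet G ∧ MvPolynomial.constantCoeff f = 0}

/-- `x` in the coinvariant ring `S/I` is `G`-invariant (for the induced action):
every lift of `x` is sent to a lift of `x` by every element of `G`. -/
def relInv {n : ℕ}
    (G : Subgroup (EuclideanSpace ℝ (Fin n) ≃ₗ[ℝ] EuclideanSpace ℝ (Fin n)))
    (I : Ideal (MvPolynomial (Fin n) ℝ)) (x : MvPolynomial (Fin n) ℝ ⧸ I) : Prop :=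
  ∀ w ∈ G, ∀ F : MvPolynomial (Fin n) ℝ,
    Ideal.Quotient.mk I F = x → Ideal.Quotient.mk I (polyAct w F) = x

/-- `toPoly` as a linear map. -/
noncomputable def toPolyL {n : ℕ} : EuclideanSpace ℝ (Fin n) →ₗ[ℝ] MvPolynomial (Fin n) ℝ where
  toFun := toPoly
  map_add' v w := by
    simp only [toPoly, ← Finset.sum_add_distrib]
    refine Finset.sum_congr rfl fun i _ => ?_
    rw [PiLp.add_apply, map_add, add_mul]
  map_smul' c v := by
    simp only [toPoly, Finset.smul_sum, RingHom.id_apply]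
    refine Finset.sum_congr rfl fun i _ => ?_
    rw [PiLp.smul_apply, smul_eq_mul, map_mul, MvPolynomial.smul_eq_C_mul, mul_assoc]

lemma sum_single {n : ℕ} (v : EuclideanSpace ℝ (Fin n)) :
    ∑ i, v i • EuclideanSpace.single i (1:ℝ) = v := by
  ext j
  have h : (∑ i, v i • EuclideanSpace.single i (1:ℝ)) j
      = ∑ i, (v i • EuclideanSpace.single i (1:ℝ)) j := by
    exact map_sum (PiLp.projₗ (𝕜 := ℝ) 2 (fun _ : Fin n => ℝ) j)
      (fun i => v i • EuclideanSpace.single i (1:ℝ)) Finset.univ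
  rw [h]
  simp [EuclideanSpace.single_apply]

lemma polyAct_toPoly {n : ℕ}
    (g : EuclideanSpace ℝ (Fin n) ≃ₗ[ℝ] EuclideanSpace ℝ (Fin n))
    (v : EuclideanSpace ℝ (Fin n)) :
    polyAct g (toPoly v) = toPoly (g v) := by
  have : toPoly v = ∑ i, v i • (MvPolynomial.X i : MvPolynomial (Fin n) ℝ) := by
    simp [toPoly, MvPolynomial.smul_eq_C_mul]
  rw [this, map_sum]
  simp only [map_smul, MvPolynomial.aeval_X, polyAct]
  have : ∑ i, v i • toPoly (g (EuclideanSpace.single i 1))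
      = toPolyL (g (∑ i, v i • EuclideanSpace.single i (1:ℝ))) := by
    rw [map_sum, map_sum]
    simp [toPolyL]
  rw [this, sum_single]
  rfl

lemma polyAct_one {n : ℕ} : polyAct (1 : EuclideanSpace ℝ (Fin n) ≃ₗ[ℝ] EuclideanSpace ℝ (Fin n)) = AlgHom.id ℝ _ := by
  apply MvPolynomial.algHom_ext
  intro i
  simp [polyAct, toPoly, EuclideanSpace.single_apply, Finset.sum_ite_eq]

lemma polyAct_mul {n : ℕ}
    (g h : EuclideanSpace ℝ (Fin n) ≃ₗ[ℝ] EuclideanSpace ℝ (Fin n)) :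
    polyAct (g * h) = (polyAct g).comp (polyAct h) := by
  apply MvPolynomial.algHom_ext
  intro i
  simp only [AlgHom.comp_apply]
  rw [show (polyAct h) (MvPolynomial.X i) = toPoly (h (EuclideanSpace.single i 1)) from
    MvPolynomial.aeval_X _ i]
  rw [polyAct_toPoly]
  rw [show (polyAct (g*h)) (MvPolynomial.X i) = toPoly ((g*h) (EuclideanSpace.single i 1)) from
    MvPolynomial.aeval_X _ i]
  rfl


lemma reflectRoot_invol {n : ℕ} (γ x : EuclideanSpace ℝ (Fin n)) :
    reflectRoot γ (reflectRoot γ x) = x := by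
  by_cases hγ : γ = 0
  · simp [reflectRoot, hγ]
  · have hg : ⟪γ, γ⟫ ≠ 0 := fun h => hγ (inner_self_eq_zero.mp h)
    have hin : ⟪x - (2*⟪x,γ⟫/⟪γ,γ⟫)•γ, γ⟫ = ⟪x,γ⟫ - (2*⟪x,γ⟫/⟪γ,γ⟫)*⟪γ,γ⟫ := by
      rw [inner_sub_left, real_inner_smul_left]
    unfold reflectRoot
    rw [hin]
    have key : ∀ a b : ℝ, b ≠ 0 → 2*(a - (2*a/b)*b)/b = -(2*a/b) := by
      intro a b hb; field_simp; ring
    have hc : 2*(⟪x,γ⟫ - (2*⟪x,γ⟫/⟪γ,γ⟫)*⟪γ,γ⟫)/⟪γ,γ⟫ = -(2*⟪x,γ⟫/⟪γ,γ⟫) :=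
      key _ _ hg
    rw [hc, neg_smul, sub_neg_eq_add, sub_add_cancel]

lemma refl_sq {n : ℕ} (γ : EuclideanSpace ℝ (Fin n))
    (σ : EuclideanSpace ℝ (Fin n) ≃ₗ[ℝ] EuclideanSpace ℝ (Fin n))
    (hσ : ∀ x, σ x = reflectRoot γ x) : σ⁻¹ = σ := by
  have : σ * σ = 1 := by
    apply LinearEquiv.toLinearMap_injective
    apply LinearMap.ext
    intro x
    show σ (σ x) = x
    rw [hσ, hσ, reflectRoot_invol]
  calc σ⁻¹ = σ⁻¹ * (σ * σ) := by rw [this, mul_one]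
  _ = σ := by rw [← mul_assoc, inv_mul_cancel, one_mul]

lemma W_maps_roots {n : ℕ} (R : RootData n) :
    ∀ w ∈ R.W, ∀ β ∈ R.Φ, w β ∈ R.Φ := by
  intro w hw
  have key : (∀ β ∈ R.Φ, w β ∈ R.Φ) ∧ (∀ β ∈ R.Φ, w⁻¹ β ∈ R.Φ) := by
    refine Subgroup.closure_induction ?_ ?_ ?_ ?_ hw
    · rintro σ ⟨γ, hγ, hσ⟩
      have h1 : ∀ β ∈ R.Φ, σ β ∈ R.Φ := fun β hβ => by
        rw [hσ]; exact R.reflect_mem γ hγ β hβ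
      exact ⟨h1, by rw [refl_sq γ σ hσ]; exact h1⟩
    · exact ⟨fun β hβ => by simpa using hβ, fun β hβ => by simpa using hβ⟩
    · rintro a b _ _ ⟨ha, ha'⟩ ⟨hb, hb'⟩
      refine ⟨fun β hβ => ?_, fun β hβ => ?_⟩
      · show a (b β) ∈ R.Φ
        exact ha _ (hb _ hβ)
      · rw [mul_inv_rev]
        show b⁻¹ (a⁻¹ β) ∈ R.Φ
        exact hb' _ (ha' _ hβ)
    · rintro a _ ⟨ha, ha'⟩
      exact ⟨ha', by simpa using ha⟩
  exact key.1

lemma W_fixes_perp {n : ℕ} (R : RootData n) :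
    ∀ w ∈ R.W, ∀ x, (∀ γ ∈ R.Φ, ⟪x, γ⟫ = 0) → w x = x := by
  intro w hw
  refine Subgroup.closure_induction ?_ ?_ ?_ ?_ hw
  · rintro σ ⟨γ, hγ, hσ⟩ x hx
    rw [hσ, reflectRoot, hx γ hγ]
    simp
  · intro x _; simp
  · rintro a b _ _ ha hb x hx
    show a (b x) = x
    rw [hb x hx, ha x hx]
  · rintro a _ ha x hx
    have := ha x hx
    show a⁻¹ x = x
    conv_lhs => rw [← this]
    exact a.symm_apply_apply x


lemma W_fix_eq_one {n : ℕ} (R : RootData n)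
    (w : EuclideanSpace ℝ (Fin n) ≃ₗ[ℝ] EuclideanSpace ℝ (Fin n)) (hw : w ∈ R.W)
    (h : ∀ β ∈ R.Φ, w β = β) : w = 1 := by
  set K := Submodule.span ℝ R.Φ with hK
  set E := LinearMap.eqLocus (w : EuclideanSpace ℝ (Fin n) →ₗ[ℝ] EuclideanSpace ℝ (Fin n))
    LinearMap.id with hE
  have h1 : K ≤ E := by
    rw [hK, Submodule.span_le]
    intro β hβ
    exact h β hβ
  have h2 : Kᗮ ≤ E := by
    intro x hx
    refine W_fixes_perp R w hw x fun γ hγ => ?_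
    have := hx γ (Submodule.subset_span hγ)
    rwa [real_inner_comm] at this
  have htop : K ⊔ Kᗮ = ⊤ := Submodule.sup_orthogonal_of_hasOrthogonalProjection
  have : (⊤ : Submodule ℝ (EuclideanSpace ℝ (Fin n))) ≤ E := htop ▸ sup_le h1 h2
  apply LinearEquiv.toLinearMap_injective
  apply LinearMap.ext
  intro x
  exact this (Submodule.mem_top : x ∈ ⊤)

lemma finite_W {n : ℕ} (R : RootData n) : Finite R.W := by
  haveI : Finite R.Φ := R.finite.to_subtype
  refine Finite.of_injective
    (fun w : R.W => (fun β : R.Φ => (⟨w.1 β, W_maps_roots R w.1 w.2 β β.2⟩ : R.Φ))) ?_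
  intro w w' hww
  have hβ : ∀ β ∈ R.Φ, w.1 β = w'.1 β := by
    intro β hb
    have := congrFun hww ⟨β, hb⟩
    exact congrArg Subtype.val this
  have hu : w'.1⁻¹ * w.1 ∈ R.W := mul_mem (inv_mem w'.2) w.2
  have : w'.1⁻¹ * w.1 = 1 := by
    apply W_fix_eq_one R _ hu
    intro β hb
    show w'.1⁻¹ (w.1 β) = β
    rw [hβ β hb]
    exact w'.1.symm_apply_apply β
  ext1
  have h1 : w.1 = w'.1 * ((w'.1)⁻¹ * w.1) := by rw [← mul_assoc, mul_inv_cancel, one_mul]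
  rw [h1, this, mul_one]

lemma parabolic_le {n : ℕ} (R : RootData n) (Θ : Set (EuclideanSpace ℝ (Fin n)))
    (hΘ : Θ ⊆ R.Δ) : parabolic Θ ≤ R.W := by
  apply Subgroup.closure_mono
  rintro σ ⟨γ, hγ, hσ⟩
  exact ⟨γ, R.pos_sub (R.Δ_sub (hΘ hγ)), hσ⟩

lemma polyAct_invIdeal {n : ℕ} (R : RootData n)
    (w : EuclideanSpace ℝ (Fin n) ≃ₗ[ℝ] EuclideanSpace ℝ (Fin n)) (hw : w ∈ R.W)
    (f : MvPolynomial (Fin n) ℝ) (hf : f ∈ invIdeal R.W) : polyAct w f ∈ invIdeal R.W := by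
  refine Submodule.span_induction ?_ ?_ ?_ ?_ hf
  · intro t ht
    rw [ht.1 w hw]
    exact Ideal.subset_span ht
  · simp
  · intro a b _ _ ha hb
    rw [map_add]
    exact add_mem ha hb
  · intro r a _ ha
    rw [smul_eq_mul, map_mul]
    exact Ideal.mul_mem_left _ _ ha

section Reynolds

variable {n : ℕ} (G : Subgroup (EuclideanSpace ℝ (Fin n) ≃ₗ[ℝ] EuclideanSpace ℝ (Fin n)))
  [Fintype G]

/-- Reynolds operator: averaging over the finite group `G`. -/
noncomputable def reyn : MvPolynomial (Fin n) ℝ →ₗ[ℝ] MvPolynomial (Fin n) ℝ :=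
  (Fintype.card G : ℝ)⁻¹ • ∑ w : G, (polyAct (w : EuclideanSpace ℝ (Fin n) ≃ₗ[ℝ]
    EuclideanSpace ℝ (Fin n))).toLinearMap

lemma reyn_apply (f : MvPolynomial (Fin n) ℝ) :
    reyn G f = (Fintype.card G : ℝ)⁻¹ • ∑ w : G, polyAct w.1 f := by
  simp [reyn, LinearMap.sum_apply]

lemma card_smul_cancel {M : Type*} [AddCommGroup M] [Module ℝ M] (x : M) :
    (Fintype.card G : ℝ)⁻¹ • (Fintype.card G • x) = x := by
  rw [← Nat.cast_smul_eq_nsmul ℝ, smul_smul,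
    inv_mul_cancel₀ (by exact_mod_cast Fintype.card_ne_zero), one_smul]

lemma reyn_of_inv (f : MvPolynomial (Fin n) ℝ) (hf : f ∈ invSet G) : reyn G f = f := by
  rw [reyn_apply]
  have : ∀ w : G, polyAct w.1 f = f := fun w => hf w.1 w.2
  rw [Finset.sum_congr rfl fun w _ => this w, Finset.sum_const, Finset.card_univ]
  exact card_smul_cancel G f

lemma reyn_mem_inv (f : MvPolynomial (Fin n) ℝ) : reyn G f ∈ invSet G := by
  intro w hw
  rw [reyn_apply, map_smul, map_sum]
  refine congrArg (fun s => (Fintype.card G : ℝ)⁻¹ • s) ?_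
  calc ∑ u : G, polyAct w (polyAct u.1 f)
      = ∑ u : G, polyAct ((Equiv.mulLeft (⟨w, hw⟩ : G)) u).1 f := by
        refine Finset.sum_congr rfl fun u _ => ?_
        rw [show ((Equiv.mulLeft (⟨w, hw⟩ : G)) u).1 = w * u.1 from rfl, polyAct_mul]
        rfl
    _ = ∑ u : G, polyAct u.1 f :=
        Equiv.sum_comp (Equiv.mulLeft (⟨w, hw⟩ : G)) (fun u : G => polyAct u.1 f)

lemma reyn_mul_inv (r b : MvPolynomial (Fin n) ℝ) (hb : b ∈ invSet G) :
    reyn G (r * b) = reyn G r * b := by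
  rw [reyn_apply, reyn_apply, smul_mul_assoc, Finset.sum_mul]
  congr 1
  refine Finset.sum_congr rfl fun w _ => ?_
  rw [map_mul, hb w.1 w.2]

omit [Fintype G] in
lemma one_mem_invSet : (1 : MvPolynomial (Fin n) ℝ) ∈ invSet G := fun _ _ => map_one _

end Reynolds

/-- the restriction of the quotient map S → S_W to the invariant ring
S^{W_Θ} is surjective onto the relative coinvariant ring S_W^{W_Θ} (the W_Θ-invariants
of S_W), and its kernel is (S^W)⁺·S^{W_Θ}; hence
S_W^{W_Θ} ≅ S^{W_Θ}/((S^W)⁺·S^{W_Θ}) ≅ S^{W_Θ} ⊗_{S^W} ℝ. -/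
theorem relative_coinvariants_from_invariants {n : ℕ} (R : RootData n)
    (Θ : Set (EuclideanSpace ℝ (Fin n))) (hΘ : Θ ⊆ R.Δ) :
    {x : MvPolynomial (Fin n) ℝ ⧸ invIdeal R.W | relInv (parabolic Θ) (invIdeal R.W) x} =
        Ideal.Quotient.mk (invIdeal R.W) '' invSet (parabolic Θ) ∧
      ∀ f ∈ invSet (parabolic Θ),
        (Ideal.Quotient.mk (invIdeal R.W) f = 0 ↔
          f ∈ Submodule.span ℝ {h : MvPolynomial (Fin n) ℝ |
            ∃ a b, a ∈ invSet R.W ∧ MvPolynomial.constantCoeff a = 0 ∧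
              b ∈ invSet (parabolic Θ) ∧ h = a * b}) := by
  have hle : parabolic Θ ≤ R.W := parabolic_le R Θ hΘ
  haveI : Finite R.W := finite_W R
  haveI : Finite (parabolic Θ) :=
    Finite.of_injective (Subgroup.inclusion hle) (Subgroup.inclusion_injective hle)
  letI : Fintype (parabolic Θ) := Fintype.ofFinite _
  set I := invIdeal R.W with hI
  set G := parabolic Θ with hG
  have hstab : ∀ w ∈ G, ∀ f ∈ I, polyAct w f ∈ I := fun w hw f hf =>
    polyAct_invIdeal R w (hle hw) f hf
  have hWG : invSet R.W ⊆ invSet G := fun f hf w hw => hf w (hle hw)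
  constructor
  · ext x
    simp only [Set.mem_setOf_eq, Set.mem_image]
    constructor
    · intro hx
      obtain ⟨F, hF⟩ := Ideal.Quotient.mk_surjective x
      refine ⟨reyn G F, reyn_mem_inv G F, ?_⟩
      have key : Ideal.Quotient.mk I (reyn G F)
          = (Fintype.card G : ℝ)⁻¹ • ∑ w : G, Ideal.Quotient.mk I (polyAct w.1 F) := by
        rw [reyn_apply, ← Ideal.Quotient.mkₐ_eq_mk ℝ I, map_smul, map_sum]
      rw [key, Finset.sum_congr rfl fun w _ => hx w.1 w.2 F hF, Finset.sum_const,
        Finset.card_univ]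
      exact card_smul_cancel G x
    · rintro ⟨f, hf, rfl⟩ w hw F hF
      rw [Ideal.Quotient.eq] at hF ⊢
      rw [← hf w hw, ← map_sub]
      exact hstab w hw _ hF
  · intro f hf
    constructor
    · intro h0
      have hfI : f ∈ I := Ideal.Quotient.eq_zero_iff_mem.mp h0
      have hspan : f ∈ Submodule.span (MvPolynomial (Fin n) ℝ)
          {g | g ∈ invSet R.W ∧ MvPolynomial.constantCoeff g = 0} := hfI
      rw [Submodule.mem_span_set] at hspan
      obtain ⟨c, hsupp, hsum⟩ := hspan
      have hfr : f = reyn G f := (reyn_of_inv G f hf).symm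
      rw [hfr, ← hsum, Finsupp.sum, map_sum]
      apply Submodule.sum_mem
      intro t ht
      have htT := hsupp ht
      rw [smul_eq_mul, reyn_mul_inv G (c t) t (hWG htT.1)]
      apply Submodule.subset_span
      exact ⟨t, reyn G (c t), htT.1, htT.2, reyn_mem_inv G (c t), mul_comm _ _⟩
    · intro hm
      rw [Ideal.Quotient.eq_zero_iff_mem]
      have hsub : Submodule.span ℝ {h : MvPolynomial (Fin n) ℝ |
            ∃ a b, a ∈ invSet R.W ∧ MvPolynomial.constantCoeff a = 0 ∧
              b ∈ invSet G ∧ h = a * b} ≤ Submodule.restrictScalars ℝ I := by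
        rw [Submodule.span_le]
        rintro h ⟨a, b, haW, hac, hbG, rfl⟩
        exact Ideal.mul_mem_right _ _ (Ideal.subset_span ⟨haW, hac⟩)
      exact hsub hm
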